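/- Let ψ ∈ PL_{D+1}(r, L) for some D ∈ ℕ, r ≥ 1 and L > 0, and fix c = (c₁,…,c_D) ∈ ℝ^D and τ > 0. (a) For each fixed x = (x₁,…,x_D) ∈ ℝ^D, the function ψ_x : ℝ → ℝ defined by ψ_x(z) := ψ(x₁,…,x_D, Σ_{ℓ=1}^D c_ℓ x_ℓ + τ z) belongs to PL₁(r, L_{‖x‖,τ}), where L_{a,τ} := Lτ · max{ 1 + (2 ∨ 2^{r−1})(1 + ‖c‖)^{r−1} a^{r−1}, (1 ∨ 2^{r−2}) τ^{r−1} } for a ≥ 0. (b) With Z ∼ N(0,1), the function Ψ : ℝ^D → ℝ defined by Ψ(x₁,…,x_D) := E[ψ(x₁,…,x_D, Σ_{ℓ=1}^D c_ℓ x_ℓ + τZ)] belongs to PL_D(r, L_τ), where L_τ := L(1 + ‖c‖) · max{ 1 + (2 ∨ 2^{r−1}) E[|τZ|^{r−1}], (1 ∨ 2^{r−2})(1 + ‖c‖)^{r−1} }. -/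

import Mathlib

open MeasureTheory ProbabilityTheory

/-- The Euclidean norm on `ℝ^D`. -/
noncomputable def euclNorm {D : ℕ} (x : Fin D → ℝ) : ℝ :=
  Real.sqrt (∑ i, (x i) ^ 2)

/-- Pseudo-Lipschitz functions of order `r` with constant `L` on `ℝ^D` (the class
`PL_D(r, L)`), with respect to the Euclidean norm. -/
def PLD {D : ℕ} (r L : ℝ) (ψ : (Fin D → ℝ) → ℝ) : Prop :=
  ∀ x y : Fin D → ℝ, |ψ x - ψ y| ≤
    L * euclNorm (fun i => x i - y i) *
      (1 + euclNorm x ^ (r - 1) + euclNorm y ^ (r - 1))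

/-- Pseudo-Lipschitz functions of order `r` with constant `L` on `ℝ` (the class `PL₁(r, L)`). -/
def PL1 (r L : ℝ) (ψ : ℝ → ℝ) : Prop :=
  ∀ x y : ℝ, |ψ x - ψ y| ≤ L * |x - y| * (1 + |x| ^ (r - 1) + |y| ^ (r - 1))

lemma euclNorm_nonneg {D : ℕ} (x : Fin D → ℝ) : 0 ≤ euclNorm x := Real.sqrt_nonneg _

lemma euclNorm_sq {D : ℕ} (x : Fin D → ℝ) : euclNorm x ^ 2 = ∑ i, x i ^ 2 := by
  rw [euclNorm, Real.sq_sqrt (by positivity)]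

lemma euclNorm_snoc_le {D : ℕ} (x : Fin D → ℝ) (t : ℝ) :
    euclNorm (Fin.snoc x t) ≤ euclNorm x + |t| := by
  have h : euclNorm (Fin.snoc x t) = Real.sqrt (∑ i, x i ^ 2 + t ^ 2) := by
    rw [euclNorm, Fin.sum_univ_castSucc]
    simp
  rw [h]
  have h2 : ∑ i, x i ^ 2 + t ^ 2 ≤ (euclNorm x + |t|) ^ 2 := by
    have h3 := euclNorm_sq x
    nlinarith [euclNorm_nonneg x, abs_nonneg t, sq_abs t]
  calc Real.sqrt (∑ i, x i ^ 2 + t ^ 2) ≤ Real.sqrt ((euclNorm x + |t|) ^ 2) :=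
        Real.sqrt_le_sqrt h2
    _ = euclNorm x + |t| := Real.sqrt_sq (add_nonneg (euclNorm_nonneg x) (abs_nonneg t))

lemma abs_sum_mul_le {D : ℕ} (c x : Fin D → ℝ) : |∑ i, c i * x i| ≤ euclNorm c * euclNorm x := by
  rw [← Real.sqrt_sq_eq_abs, euclNorm, euclNorm, ← Real.sqrt_mul (by positivity)]
  exact Real.sqrt_le_sqrt (Finset.sum_mul_sq_le_sq_mul_sq _ _ _)

lemma snoc_sub {D : ℕ} (x y : Fin D → ℝ) (a b : ℝ) :
    (fun i => Fin.snoc x a i - Fin.snoc y b i) =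
      (Fin.snoc (fun i => x i - y i) (a - b) : Fin (D+1) → ℝ) := by
  funext i
  refine Fin.lastCases ?_ ?_ i <;> simp

lemma euclNorm_snoc_zero {D : ℕ} (t : ℝ) :
    euclNorm (Fin.snoc (fun _ : Fin D => (0:ℝ)) t) = |t| := by
  rw [euclNorm, Fin.sum_univ_castSucc]
  simp [Real.sqrt_sq_eq_abs]

lemma rpow_add_le_max {p : ℝ} (hp : 0 ≤ p) {a b : ℝ} (ha : 0 ≤ a) (hb : 0 ≤ b) :
    (a + b) ^ p ≤ max 1 (2 ^ (p - 1)) * (a ^p + b ^ p) := by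
  have habp : 0 ≤ a ^ p + b ^ p := by positivity
  rcases le_total p 1 with h1 | h1
  · have h2 : (a + b) ^ p ≤ a ^ p + b ^ p := by
      have h3 := NNReal.rpow_add_le_add_rpow a.toNNReal b.toNNReal hp h1
      rw [← NNReal.coe_le_coe] at h3
      push_cast [Real.coe_toNNReal a ha, Real.coe_toNNReal b hb] at h3
      exact h3
    calc (a + b) ^ p ≤ 1 * (a ^ p + b ^ p) := by rw [one_mul]; exact h2
      _ ≤ _ := by gcongr; exact le_max_left _ _
  · have h4 : (a + b) ^ p ≤ 2 ^ (p - 1) * (a ^ p + b ^ p) := by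
      have h3 := NNReal.rpow_add_le_mul_rpow_add_rpow a.toNNReal b.toNNReal h1
      rw [← NNReal.coe_le_coe] at h3
      push_cast [Real.coe_toNNReal a ha, Real.coe_toNNReal b hb] at h3
      exact h3
    calc (a + b) ^ p ≤ 2 ^ (p - 1) * (a ^ p + b ^ p) := h4
      _ ≤ _ := by gcongr; exact le_max_right _ _

lemma PL1.continuous {r K : ℝ} (hr : 1 ≤ r) {f : ℝ → ℝ} (hf : PL1 r K f) : Continuous f := by
  rw [continuous_iff_continuousAt]
  intro w
  rw [ContinuousAt, tendsto_iff_dist_tendsto_zero]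
  have hbound : ∀ z, dist (f z) (f w) ≤ K * |z - w| * (1 + |z| ^ (r-1) + |w| ^ (r-1)) := by
    intro z; rw [Real.dist_eq]; exact hf z w
  have habs : Continuous fun z : ℝ => |z| ^ (r - 1) :=
    continuous_abs.rpow_const (fun z => Or.inr (by linarith))
  have hcont : Continuous fun z : ℝ =>
      K * |z - w| * (1 + |z| ^ (r-1) + |w| ^ (r-1)) :=
    ((continuous_const.mul (continuous_id.sub continuous_const).abs).mul
      ((continuous_const.add habs).add continuous_const))
  have htend := hcont.tendsto w
  simp only [sub_self, abs_zero, mul_zero, zero_mul] at htend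
  exact squeeze_zero (fun z => dist_nonneg) hbound htend

lemma integrable_abs_rpow_gaussian {s : ℝ} (hs : 0 ≤ s) :
    Integrable (fun z : ℝ => |z| ^ s) (gaussianReal 0 1) := by
  have hb : (0:ℝ) < 1/2 := by norm_num
  have h1 : Integrable (fun z : ℝ => z ^ s * Real.exp (-(1/2) * z ^ 2)) :=
    integrable_rpow_mul_exp_neg_mul_sq hb (by linarith)
  have h2 : Integrable (fun z : ℝ => (-z) ^ s * Real.exp (-(1/2) * z ^ 2)) := by
    have h := h1.comp_neg
    simpa using h
  have hFcont : Continuous fun z : ℝ => |z| ^ s * Real.exp (-(1/2) * z ^ 2) := by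
    apply Continuous.mul
    · exact continuous_abs.rpow_const fun _ => Or.inr hs
    · exact Real.continuous_exp.comp (continuous_const.mul (continuous_pow 2))
  have hF : Integrable (fun z : ℝ => |z| ^ s * Real.exp (-(1/2) * z ^ 2)) := by
    refine (h1.sup h2).mono' hFcont.aestronglyMeasurable ?_
    filter_upwards with z
    rw [Real.norm_eq_abs, abs_of_nonneg (by positivity)]
    rcases le_total 0 z with h | h
    · calc |z| ^ s * Real.exp (-(1/2) * z ^ 2)
          = z ^ s * Real.exp (-(1/2) * z ^ 2) := by rw [abs_of_nonneg h]
        _ ≤ _ := le_sup_left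
    · calc |z| ^ s * Real.exp (-(1/2) * z ^ 2)
          = (-z) ^ s * Real.exp (-(1/2) * z ^ 2) := by rw [abs_of_nonpos h]
        _ ≤ _ := le_sup_right
  rw [gaussianReal_of_var_ne_zero 0 one_ne_zero,
    integrable_withDensity_iff (measurable_gaussianPDF 0 1)
      (Filter.Eventually.of_forall fun _ => ENNReal.ofReal_lt_top)]
  have key : ∀ z : ℝ, |z| ^ s * (gaussianPDF 0 1 z).toReal
      = (Real.sqrt (2 * Real.pi * (1:NNReal)))⁻¹ * (|z| ^ s * Real.exp (-(1/2) * z ^ 2)) := by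
    intro z
    rw [gaussianPDF, ENNReal.toReal_ofReal (gaussianPDFReal_nonneg _ _ _), gaussianPDFReal]
    have harg : -(z - 0) ^ 2 / (2 * ((1:NNReal):ℝ)) = -(1/2) * z ^ 2 := by push_cast; ring
    rw [harg]; ring
  simp only [key]
  exact hF.const_mul _

/-- **Composition properties of pseudo-Lipschitz functions** (Lemma 12 of the paper).
Let `ψ ∈ PL_{D+1}(r, L)`, `c ∈ ℝ^D` and `τ > 0`.
(a) For each fixed `x ∈ ℝ^D`, `z ↦ ψ(x, ∑ℓ cℓ xℓ + τ z)` belongs to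
    `PL₁(r, L_{‖x‖,τ})` with the displayed constant.
(b) With `Z ∼ N(0,1)`, `x ↦ E ψ(x, ∑ℓ cℓ xℓ + τ Z)` belongs to `PL_D(r, L_τ)`
    with the displayed constant. -/
theorem pseudoLipschitz_gaussian_composition
    {D : ℕ} (r L : ℝ) (hr : 1 ≤ r) (hL : 0 < L)
    (ψ : (Fin (D + 1) → ℝ) → ℝ) (hψ : PLD r L ψ)
    (c : Fin D → ℝ) (τ : ℝ) (hτ : 0 < τ) :
    (∀ x : Fin D → ℝ,
      PL1 r
        (L * τ * max
          (1 + max 2 (2 ^ (r - 1)) * (1 + euclNorm c) ^ (r - 1) * euclNorm x ^ (r - 1))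
          (max 1 (2 ^ (r - 2)) * τ ^ (r - 1)))
        (fun z => ψ (Fin.snoc x (∑ ℓ, c ℓ * x ℓ + τ * z)))) ∧
    PLD r
      (L * (1 + euclNorm c) * max
        (1 + max 2 (2 ^ (r - 1)) * ∫ z, |τ * z| ^ (r - 1) ∂(gaussianReal 0 1))
        (max 1 (2 ^ (r - 2)) * (1 + euclNorm c) ^ (r - 1)))
      (fun x => ∫ z, ψ (Fin.snoc x (∑ ℓ, c ℓ * x ℓ + τ * z)) ∂(gaussianReal 0 1)) := by
  have hp : (0:ℝ) ≤ r - 1 := by linarith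
  have hc0 : (0:ℝ) ≤ euclNorm c := euclNorm_nonneg c
  have hc1 : (0:ℝ) < 1 + euclNorm c := by linarith
  have hM0 : (0:ℝ) ≤ max 1 (2 ^ (r - 2)) := le_trans zero_le_one (le_max_left _ _)
  have h21 : (2:ℝ) ^ (r - 1) = 2 * 2 ^ (r - 2) := by
    rw [show r - 1 = 1 + (r - 2) by ring, Real.rpow_add (by norm_num : (0:ℝ) < 2),
      Real.rpow_one]
  have h2M : max (2:ℝ) (2 ^ (r - 1)) = 2 * max (1:ℝ) (2 ^ (r - 2)) := by
    rcases le_total (1:ℝ) (2 ^ (r - 2)) with h | h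
    · rw [max_eq_right h, max_eq_right (by linarith : (2:ℝ) ≤ 2 ^ (r - 1)), h21]
    · rw [max_eq_left h, mul_one, max_eq_left (by linarith : (2:ℝ) ^ (r - 1) ≤ 2)]
  -- key norm bound
  have key : ∀ (x : Fin D → ℝ) (z : ℝ),
      euclNorm (Fin.snoc x (∑ ℓ, c ℓ * x ℓ + τ * z)) ^ (r - 1) ≤
        max 1 (2 ^ (r - 2)) *
          ((1 + euclNorm c) ^ (r - 1) * euclNorm x ^ (r - 1) + |τ * z| ^ (r - 1)) := by
    intro x z
    have h1 : euclNorm (Fin.snoc x (∑ ℓ, c ℓ * x ℓ + τ * z))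
        ≤ (1 + euclNorm c) * euclNorm x + |τ * z| := by
      calc euclNorm (Fin.snoc x (∑ ℓ, c ℓ * x ℓ + τ * z))
          ≤ euclNorm x + |∑ ℓ, c ℓ * x ℓ + τ * z| := euclNorm_snoc_le _ _
        _ ≤ euclNorm x + (|∑ ℓ, c ℓ * x ℓ| + |τ * z|) :=
            add_le_add_right (abs_add_le _ _) _
        _ ≤ euclNorm x + (euclNorm c * euclNorm x + |τ * z|) := by
            gcongr
            exact abs_sum_mul_le c x
        _ = (1 + euclNorm c) * euclNorm x + |τ * z| := by ring
    have h2 := Real.rpow_le_rpow (euclNorm_nonneg _) h1 hp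
    have h3 := rpow_add_le_max (p := r - 1) hp
        (mul_nonneg hc1.le (euclNorm_nonneg x)) (abs_nonneg (τ * z))
    rw [show r - 1 - 1 = r - 2 by ring] at h3
    calc euclNorm (Fin.snoc x (∑ ℓ, c ℓ * x ℓ + τ * z)) ^ (r - 1)
        ≤ ((1 + euclNorm c) * euclNorm x + |τ * z|) ^ (r - 1) := h2
      _ ≤ max 1 (2 ^ (r - 2)) *
            (((1 + euclNorm c) * euclNorm x) ^ (r - 1) + |τ * z| ^ (r - 1)) := h3
      _ = _ := by rw [Real.mul_rpow hc1.le (euclNorm_nonneg x)]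
  -- part (a)
  have parta : ∀ x : Fin D → ℝ,
      PL1 r
        (L * τ * max
          (1 + max 2 (2 ^ (r - 1)) * (1 + euclNorm c) ^ (r - 1) * euclNorm x ^ (r - 1))
          (max 1 (2 ^ (r - 2)) * τ ^ (r - 1)))
        (fun z => ψ (Fin.snoc x (∑ ℓ, c ℓ * x ℓ + τ * z))) := by
    intro x z w
    have h := hψ (Fin.snoc x (∑ ℓ, c ℓ * x ℓ + τ * z)) (Fin.snoc x (∑ ℓ, c ℓ * x ℓ + τ * w))
    have hdiff : euclNorm (fun i : Fin (D+1) =>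
        (Fin.snoc x (∑ ℓ, c ℓ * x ℓ + τ * z) : Fin (D+1) → ℝ) i
        - (Fin.snoc x (∑ ℓ, c ℓ * x ℓ + τ * w) : Fin (D+1) → ℝ) i) = τ * |z - w| := by
      have hfun : (fun i : Fin (D+1) => (Fin.snoc x (∑ ℓ, c ℓ * x ℓ + τ * z) : Fin (D+1) → ℝ) i
          - (Fin.snoc x (∑ ℓ, c ℓ * x ℓ + τ * w) : Fin (D+1) → ℝ) i)
          = (Fin.snoc (fun _ : Fin D => (0:ℝ)) (τ * (z - w)) : Fin (D+1) → ℝ) := by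
        funext i
        refine Fin.lastCases ?_ (fun j => ?_) i
        · simp only [Fin.snoc_last]; ring
        · simp only [Fin.snoc_castSucc]; ring
      rw [hfun, euclNorm_snoc_zero, abs_mul, abs_of_pos hτ]
    rw [hdiff] at h
    have hkz := key x z
    have hkw := key x w
    have hτz : |τ * z| ^ (r - 1) = τ ^ (r - 1) * |z| ^ (r - 1) := by
      rw [abs_mul, Real.mul_rpow (abs_nonneg τ) (abs_nonneg z), abs_of_pos hτ]
    have hτw : |τ * w| ^ (r - 1) = τ ^ (r - 1) * |w| ^ (r - 1) := by
      rw [abs_mul, Real.mul_rpow (abs_nonneg τ) (abs_nonneg w), abs_of_pos hτ]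
    rw [hτz] at hkz
    rw [hτw] at hkw
    set K := max
        (1 + max 2 (2 ^ (r - 1)) * (1 + euclNorm c) ^ (r - 1) * euclNorm x ^ (r - 1))
        (max 1 (2 ^ (r - 2)) * τ ^ (r - 1)) with hKdef
    have hC1K : 1 + max 2 (2 ^ (r - 1)) * (1 + euclNorm c) ^ (r - 1) * euclNorm x ^ (r - 1)
        ≤ K := le_max_left _ _
    have hC2K : max 1 (2 ^ (r - 2)) * τ ^ (r - 1) ≤ K := le_max_right _ _
    have haz : (0:ℝ) ≤ |z| ^ (r - 1) := Real.rpow_nonneg (abs_nonneg z) _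
    have haw : (0:ℝ) ≤ |w| ^ (r - 1) := Real.rpow_nonneg (abs_nonneg w) _
    have hsum : 1 + euclNorm (Fin.snoc x (∑ ℓ, c ℓ * x ℓ + τ * z)) ^ (r - 1)
        + euclNorm (Fin.snoc x (∑ ℓ, c ℓ * x ℓ + τ * w)) ^ (r - 1)
        ≤ K * (1 + |z| ^ (r - 1) + |w| ^ (r - 1)) := by
      have h2M' : max 2 (2 ^ (r - 1)) * ((1 + euclNorm c) ^ (r - 1) * euclNorm x ^ (r - 1))
          = 2 * (max 1 (2 ^ (r - 2)) * ((1 + euclNorm c) ^ (r - 1) * euclNorm x ^ (r - 1))) := by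
        rw [h2M]; ring
      nlinarith [mul_nonneg (sub_nonneg.2 hC2K) haz, mul_nonneg (sub_nonneg.2 hC2K) haw, h2M']
    have hfin : L * (τ * |z - w|) *
        (1 + euclNorm (Fin.snoc x (∑ ℓ, c ℓ * x ℓ + τ * z)) ^ (r - 1)
          + euclNorm (Fin.snoc x (∑ ℓ, c ℓ * x ℓ + τ * w)) ^ (r - 1))
        ≤ L * τ * K * |z - w| * (1 + |z| ^ (r - 1) + |w| ^ (r - 1)) := by
      have h0 : (0:ℝ) ≤ L * (τ * |z - w|) := by positivity
      calc L * (τ * |z - w|) * _ ≤ L * (τ * |z - w|) * (K * (1 + |z| ^ (r - 1) + |w| ^ (r - 1))) :=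
            mul_le_mul_of_nonneg_left hsum h0
        _ = L * τ * K * |z - w| * (1 + |z| ^ (r - 1) + |w| ^ (r - 1)) := by ring
    exact h.trans hfin
  refine ⟨parta, ?_⟩
  -- part (b)
  have hK0 : ∀ v : Fin D → ℝ, 0 ≤ L * τ * max
      (1 + max 2 (2 ^ (r - 1)) * (1 + euclNorm c) ^ (r - 1) * euclNorm v ^ (r - 1))
      (max 1 (2 ^ (r - 2)) * τ ^ (r - 1)) := by
    intro v
    have h0 : (0:ℝ) ≤ max 1 (2 ^ (r - 2)) * τ ^ (r - 1) :=
      mul_nonneg hM0 (Real.rpow_nonneg hτ.le _)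
    exact mul_nonneg (mul_nonneg hL.le hτ.le) (h0.trans (le_max_right _ _))
  have hIτint : Integrable (fun z : ℝ => |τ * z| ^ (r - 1)) (gaussianReal 0 1) := by
    have h := (integrable_abs_rpow_gaussian hp).const_mul (τ ^ (r - 1))
    refine h.congr (Filter.Eventually.of_forall fun z => ?_)
    show τ ^ (r - 1) * |z| ^ (r - 1) = |τ * z| ^ (r - 1)
    rw [abs_mul, Real.mul_rpow (abs_nonneg τ) (abs_nonneg z), abs_of_pos hτ]
  have hfint : ∀ v : Fin D → ℝ,
      Integrable (fun z => ψ (Fin.snoc v (∑ ℓ, c ℓ * v ℓ + τ * z))) (gaussianReal 0 1) := by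
    intro v
    obtain ⟨Kv, hKv0, hplv⟩ : ∃ K : ℝ, 0 ≤ K ∧
        PL1 r K (fun z => ψ (Fin.snoc v (∑ ℓ, c ℓ * v ℓ + τ * z))) := ⟨_, hK0 v, parta v⟩
    have hcont : Continuous (fun z => ψ (Fin.snoc v (∑ ℓ, c ℓ * v ℓ + τ * z))) :=
      PL1.continuous hr hplv
    have hbound : ∀ z : ℝ, ‖ψ (Fin.snoc v (∑ ℓ, c ℓ * v ℓ + τ * z))‖ ≤
        |ψ (Fin.snoc v (∑ ℓ, c ℓ * v ℓ + τ * 0))| +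
          Kv * (2 * |z| ^ (1:ℝ) + |z| ^ (1 + (r - 1))) := by
      intro z
      have h := hplv z 0
      simp only [sub_zero, abs_zero] at h
      have h0p : (0:ℝ) ^ (r - 1) ≤ 1 := Real.rpow_le_one le_rfl zero_le_one hp
      have h0p' : (0:ℝ) ≤ (0:ℝ) ^ (r - 1) := Real.rpow_nonneg le_rfl _
      have hsplit : |z| * |z| ^ (r - 1) = |z| ^ (1 + (r - 1)) := by
        rw [Real.rpow_add' (abs_nonneg z) (by intro hh; linarith : 1 + (r - 1) ≠ 0),
          Real.rpow_one]
      have habs : |ψ (Fin.snoc v (∑ ℓ, c ℓ * v ℓ + τ * z))|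
            - |ψ (Fin.snoc v (∑ ℓ, c ℓ * v ℓ + τ * 0))|
          ≤ |ψ (Fin.snoc v (∑ ℓ, c ℓ * v ℓ + τ * z))
            - ψ (Fin.snoc v (∑ ℓ, c ℓ * v ℓ + τ * 0))| := abs_sub_abs_le_abs_sub _ _
      rw [Real.norm_eq_abs, Real.rpow_one]
      nlinarith [abs_nonneg z, Real.rpow_nonneg (abs_nonneg z) (r - 1),
        mul_nonneg (mul_nonneg hKv0 (abs_nonneg z)) (sub_nonneg.2 h0p)]
    have hgint : Integrable (fun z : ℝ => |ψ (Fin.snoc v (∑ ℓ, c ℓ * v ℓ + τ * 0))| +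
        Kv * (2 * |z| ^ (1:ℝ) + |z| ^ (1 + (r - 1)))) (gaussianReal 0 1) :=
      (integrable_const _).add
        ((((integrable_abs_rpow_gaussian (by norm_num : (0:ℝ) ≤ 1)).const_mul 2).add
          (integrable_abs_rpow_gaussian (by linarith : (0:ℝ) ≤ 1 + (r - 1)))).const_mul Kv)
    exact hgint.mono' hcont.aestronglyMeasurable (Filter.Eventually.of_forall hbound)
  intro x y
  have hXp : (0:ℝ) ≤ euclNorm x ^ (r - 1) := Real.rpow_nonneg (euclNorm_nonneg x) _
  have hYp : (0:ℝ) ≤ euclNorm y ^ (r - 1) := Real.rpow_nonneg (euclNorm_nonneg y) _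
  have hd0 : (0:ℝ) ≤ euclNorm (fun i => x i - y i) := euclNorm_nonneg _
  have hpoint : ∀ z : ℝ,
      |ψ (Fin.snoc x (∑ ℓ, c ℓ * x ℓ + τ * z)) - ψ (Fin.snoc y (∑ ℓ, c ℓ * y ℓ + τ * z))| ≤
        (L * ((1 + euclNorm c) * euclNorm (fun i => x i - y i))) *
          ((1 + max 2 (2 ^ (r - 1)) * |τ * z| ^ (r - 1)) +
            max 1 (2 ^ (r - 2)) * (1 + euclNorm c) ^ (r - 1) *
              (euclNorm x ^ (r - 1) + euclNorm y ^ (r - 1))) := by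
    intro z
    have h := hψ (Fin.snoc x (∑ ℓ, c ℓ * x ℓ + τ * z)) (Fin.snoc y (∑ ℓ, c ℓ * y ℓ + τ * z))
    have hfun : (fun i : Fin (D+1) =>
        (Fin.snoc x (∑ ℓ, c ℓ * x ℓ + τ * z) : Fin (D+1) → ℝ) i
        - (Fin.snoc y (∑ ℓ, c ℓ * y ℓ + τ * z) : Fin (D+1) → ℝ) i)
        = (Fin.snoc (fun i => x i - y i) (∑ ℓ, c ℓ * (x ℓ - y ℓ)) : Fin (D+1) → ℝ) := by
      funext i
      refine Fin.lastCases ?_ (fun j => ?_) i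
      · simp only [Fin.snoc_last]
        rw [Finset.sum_congr rfl (fun i _ => mul_sub (c i) (x i) (y i)),
          Finset.sum_sub_distrib]
        ring
      · simp only [Fin.snoc_castSucc]
    rw [hfun] at h
    have hdle : euclNorm (Fin.snoc (fun i => x i - y i) (∑ ℓ, c ℓ * (x ℓ - y ℓ)) :
          Fin (D+1) → ℝ)
        ≤ (1 + euclNorm c) * euclNorm (fun i => x i - y i) := by
      refine (euclNorm_snoc_le _ _).trans ?_
      have h2 := abs_sum_mul_le c (fun i => x i - y i)
      nlinarith [h2]
    have hkx := key x z
    have hky := key y z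
    have hτ0 : (0:ℝ) ≤ |τ * z| ^ (r - 1) := Real.rpow_nonneg (abs_nonneg _) _
    have hNx : (0:ℝ) ≤ euclNorm (Fin.snoc x (∑ ℓ, c ℓ * x ℓ + τ * z)) ^ (r - 1) :=
      Real.rpow_nonneg (euclNorm_nonneg _) _
    have hNy : (0:ℝ) ≤ euclNorm (Fin.snoc y (∑ ℓ, c ℓ * y ℓ + τ * z)) ^ (r - 1) :=
      Real.rpow_nonneg (euclNorm_nonneg _) _
    have hQ : 1 + euclNorm (Fin.snoc x (∑ ℓ, c ℓ * x ℓ + τ * z)) ^ (r - 1)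
          + euclNorm (Fin.snoc y (∑ ℓ, c ℓ * y ℓ + τ * z)) ^ (r - 1)
        ≤ (1 + max 2 (2 ^ (r - 1)) * |τ * z| ^ (r - 1)) +
            max 1 (2 ^ (r - 2)) * (1 + euclNorm c) ^ (r - 1) *
              (euclNorm x ^ (r - 1) + euclNorm y ^ (r - 1)) := by
      have h2M'' : max 2 (2 ^ (r - 1)) * |τ * z| ^ (r - 1)
          = 2 * (max 1 (2 ^ (r - 2)) * |τ * z| ^ (r - 1)) := by rw [h2M]; ring
      nlinarith [hkx, hky]
    calc |ψ (Fin.snoc x (∑ ℓ, c ℓ * x ℓ + τ * z))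
          - ψ (Fin.snoc y (∑ ℓ, c ℓ * y ℓ + τ * z))|
        ≤ L * euclNorm (Fin.snoc (fun i => x i - y i) (∑ ℓ, c ℓ * (x ℓ - y ℓ)) :
              Fin (D+1) → ℝ) *
            (1 + euclNorm (Fin.snoc x (∑ ℓ, c ℓ * x ℓ + τ * z)) ^ (r - 1)
              + euclNorm (Fin.snoc y (∑ ℓ, c ℓ * y ℓ + τ * z)) ^ (r - 1)) := h
      _ ≤ _ := by
          refine mul_le_mul ?_ hQ (by linarith) ?_
          · exact mul_le_mul_of_nonneg_left hdle hL.le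
          · exact mul_nonneg hL.le (mul_nonneg hc1.le hd0)
  have hB1 : Integrable (fun z : ℝ => 1 + max 2 (2 ^ (r - 1)) * |τ * z| ^ (r - 1))
      (gaussianReal 0 1) := (integrable_const 1).add (hIτint.const_mul _)
  have hB2 : Integrable (fun z : ℝ => (1 + max 2 (2 ^ (r - 1)) * |τ * z| ^ (r - 1)) +
      max 1 (2 ^ (r - 2)) * (1 + euclNorm c) ^ (r - 1) *
        (euclNorm x ^ (r - 1) + euclNorm y ^ (r - 1))) (gaussianReal 0 1) :=
    hB1.add (integrable_const _)
  have hBint : Integrable (fun z : ℝ =>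
      (L * ((1 + euclNorm c) * euclNorm (fun i => x i - y i))) *
        ((1 + max 2 (2 ^ (r - 1)) * |τ * z| ^ (r - 1)) +
          max 1 (2 ^ (r - 2)) * (1 + euclNorm c) ^ (r - 1) *
            (euclNorm x ^ (r - 1) + euclNorm y ^ (r - 1)))) (gaussianReal 0 1) :=
    hB2.const_mul _
  have habsint : Integrable (fun z : ℝ =>
      |ψ (Fin.snoc x (∑ ℓ, c ℓ * x ℓ + τ * z)) - ψ (Fin.snoc y (∑ ℓ, c ℓ * y ℓ + τ * z))|)
      (gaussianReal 0 1) := ((hfint x).sub (hfint y)).abs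
  have hI0 : 0 ≤ ∫ z, |τ * z| ^ (r - 1) ∂(gaussianReal 0 1) :=
    integral_nonneg fun z => Real.rpow_nonneg (abs_nonneg _) _
  have hBval : ∫ z, (L * ((1 + euclNorm c) * euclNorm (fun i => x i - y i))) *
        ((1 + max 2 (2 ^ (r - 1)) * |τ * z| ^ (r - 1)) +
          max 1 (2 ^ (r - 2)) * (1 + euclNorm c) ^ (r - 1) *
            (euclNorm x ^ (r - 1) + euclNorm y ^ (r - 1))) ∂(gaussianReal 0 1)
      = (L * ((1 + euclNorm c) * euclNorm (fun i => x i - y i))) *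
        ((1 + max 2 (2 ^ (r - 1)) * ∫ z, |τ * z| ^ (r - 1) ∂(gaussianReal 0 1)) +
          max 1 (2 ^ (r - 2)) * (1 + euclNorm c) ^ (r - 1) *
            (euclNorm x ^ (r - 1) + euclNorm y ^ (r - 1))) := by
    rw [integral_const_mul,
      integral_add hB1 (integrable_const _),
      integral_add (integrable_const 1) (hIτint.const_mul _), integral_const_mul,
      integral_const, integral_const]
    simp [measure_univ]
  have hfinal : (1 + max 2 (2 ^ (r - 1)) * ∫ z, |τ * z| ^ (r - 1) ∂(gaussianReal 0 1)) +
        max 1 (2 ^ (r - 2)) * (1 + euclNorm c) ^ (r - 1) *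
          (euclNorm x ^ (r - 1) + euclNorm y ^ (r - 1))
      ≤ (max (1 + max 2 (2 ^ (r - 1)) * ∫ z, |τ * z| ^ (r - 1) ∂(gaussianReal 0 1))
          (max 1 (2 ^ (r - 2)) * (1 + euclNorm c) ^ (r - 1))) *
        (1 + euclNorm x ^ (r - 1) + euclNorm y ^ (r - 1)) := by
    have hKb1 : 1 + max 2 (2 ^ (r - 1)) * ∫ z, |τ * z| ^ (r - 1) ∂(gaussianReal 0 1)
        ≤ max (1 + max 2 (2 ^ (r - 1)) * ∫ z, |τ * z| ^ (r - 1) ∂(gaussianReal 0 1))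
          (max 1 (2 ^ (r - 2)) * (1 + euclNorm c) ^ (r - 1)) := le_max_left _ _
    have hKb2 : max 1 (2 ^ (r - 2)) * (1 + euclNorm c) ^ (r - 1)
        ≤ max (1 + max 2 (2 ^ (r - 1)) * ∫ z, |τ * z| ^ (r - 1) ∂(gaussianReal 0 1))
          (max 1 (2 ^ (r - 2)) * (1 + euclNorm c) ^ (r - 1)) := le_max_right _ _
    nlinarith [mul_nonneg (sub_nonneg.2 hKb2) hXp, mul_nonneg (sub_nonneg.2 hKb2) hYp]
  have hsub := integral_sub (hfint x) (hfint y)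
  calc |(∫ z, ψ (Fin.snoc x (∑ ℓ, c ℓ * x ℓ + τ * z)) ∂(gaussianReal 0 1))
        - ∫ z, ψ (Fin.snoc y (∑ ℓ, c ℓ * y ℓ + τ * z)) ∂(gaussianReal 0 1)|
      = |∫ z, (ψ (Fin.snoc x (∑ ℓ, c ℓ * x ℓ + τ * z))
          - ψ (Fin.snoc y (∑ ℓ, c ℓ * y ℓ + τ * z))) ∂(gaussianReal 0 1)| := by rw [hsub]
    _ ≤ ∫ z, |ψ (Fin.snoc x (∑ ℓ, c ℓ * x ℓ + τ * z))
          - ψ (Fin.snoc y (∑ ℓ, c ℓ * y ℓ + τ * z))| ∂(gaussianReal 0 1) := by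
        simpa [Real.norm_eq_abs] using
          norm_integral_le_integral_norm (μ := gaussianReal 0 1)
            (fun z => ψ (Fin.snoc x (∑ ℓ, c ℓ * x ℓ + τ * z))
              - ψ (Fin.snoc y (∑ ℓ, c ℓ * y ℓ + τ * z)))
    _ ≤ ∫ z, (L * ((1 + euclNorm c) * euclNorm (fun i => x i - y i))) *
          ((1 + max 2 (2 ^ (r - 1)) * |τ * z| ^ (r - 1)) +
            max 1 (2 ^ (r - 2)) * (1 + euclNorm c) ^ (r - 1) *
              (euclNorm x ^ (r - 1) + euclNorm y ^ (r - 1))) ∂(gaussianReal 0 1) :=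
        integral_mono habsint hBint hpoint
    _ = _ := hBval
    _ ≤ (L * ((1 + euclNorm c) * euclNorm (fun i => x i - y i))) *
          ((max (1 + max 2 (2 ^ (r - 1)) * ∫ z, |τ * z| ^ (r - 1) ∂(gaussianReal 0 1))
            (max 1 (2 ^ (r - 2)) * (1 + euclNorm c) ^ (r - 1))) *
          (1 + euclNorm x ^ (r - 1) + euclNorm y ^ (r - 1))) :=
        mul_le_mul_of_nonneg_left hfinal
          (mul_nonneg hL.le (mul_nonneg hc1.le hd0))
    _ = _ := by ring
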